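/- Let τ > 0, b > 0, and r ∈ (0, b]. Define p(λ) = β τ e^(τ(λ−r)) |s−λ|^(τ s − 1) / |s−r|^(τ s) on [r, s] (and 0 elsewhere), where s > r and β > 0. Then p solves the stationary transport equation d/dλ[((s−λ)/τ) p(λ)] + λ p(λ) = 0 on (r, s), and ∫ e^(uλ) p(λ) dλ = β τ e^(su + (s−r)τ) γ(τ s, (s−r)(τ+u)) / ((s−r)(τ+u))^(τ s) for u > −τ. -/

import Mathlib

open Real MeasureTheory

/-- The lower incomplete Gamma function `γ(a, z) = ∫₀^z t^(a-1) e^(-t) dt`. -/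
noncomputable def lowerGamma (a z : ℝ) : ℝ := ∫ t in (0:ℝ)..z, t ^ (a - 1) * Real.exp (-t)

/-- The thermodynamic mean-field stationary density
`p(λ) = β τ e^(τ(λ−r)) |s−λ|^(τs−1)/|s−r|^(τs)` on `[r,s]` solves
`d/dλ[((s−λ)/τ)p(λ)] + λ p(λ) = 0` on `(r,s)`, and its MGF is
`∫ e^(uλ) p(λ) dλ = β τ e^(su+(s−r)τ) γ(τs,(s−r)(τ+u))/((s−r)(τ+u))^(τs)` for `u > −τ`. -/
theorem stmt16 (τ b r s β : ℝ) (hτ : 0 < τ) (hb : 0 < b) (hr : 0 < r) (hrb : r ≤ b)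
    (hrs : r < s) (hβ : 0 < β) :
    let p : ℝ → ℝ := fun l => if l ∈ Set.Icc r s then
      β * τ * Real.exp (τ * (l - r)) * |s - l| ^ (τ * s - 1) / |s - r| ^ (τ * s) else 0
    (∀ l ∈ Set.Ioo r s, deriv (fun l' => (s - l') / τ * p l') l + l * p l = 0) ∧
    (∀ u : ℝ, -τ < u →
      ∫ l : ℝ, Real.exp (u * l) * p l =
        β * τ * Real.exp (s * u + (s - r) * τ) * lowerGamma (τ * s) ((s - r) * (τ + u)) /
          ((s - r) * (τ + u)) ^ (τ * s)) := by
  intro p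
  have hsr : 0 < s - r := by linarith
  have hB : (0:ℝ) < (s - r) ^ (τ * s) := Real.rpow_pos_of_pos hsr _
  have habsr : |s - r| = s - r := abs_of_pos hsr
  constructor
  · -- ODE part
    intro l hl
    have hls : 0 < s - l := by linarith [hl.2]
    set F : ℝ → ℝ := fun l' =>
      β / (s - r) ^ (τ * s) * (Real.exp (τ * (l' - r)) * (s - l') ^ (τ * s)) with hF
    have hev : (fun l' => (s - l') / τ * p l') =ᶠ[nhds l] F := by
      filter_upwards [isOpen_Ioo.mem_nhds hl] with l' hl'
      have hls' : 0 < s - l' := by linarith [hl'.2]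
      have hmem : l' ∈ Set.Icc r s := ⟨le_of_lt hl'.1, le_of_lt hl'.2⟩
      have habs : |s - l'| = s - l' := abs_of_pos hls'
      have hA : (s - l') ^ (τ * s - 1) * (s - l') = (s - l') ^ (τ * s) := by
        rw [← Real.rpow_add_one hls'.ne' (τ * s - 1)]; norm_num
      simp only [p, if_pos hmem, habs, habsr, F]
      field_simp
      rw [mul_comm s τ, ← hA]; ring
    have e1 : HasDerivAt (fun l' => Real.exp (τ * (l' - r)))
        (Real.exp (τ * (l - r)) * (τ * 1)) l := by
      exact (((hasDerivAt_id l).sub_const r).const_mul τ).exp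
    have e2 : HasDerivAt (fun l' => (s - l') ^ (τ * s))
        ((0 - 1) * (τ * s) * (s - l) ^ (τ * s - 1)) l := by
      exact ((hasDerivAt_const l s).sub (hasDerivAt_id l)).rpow_const (Or.inl hls.ne')
    have hD : HasDerivAt F
        (β / (s - r) ^ (τ * s) *
          (Real.exp (τ * (l - r)) * (τ * 1) * (s - l) ^ (τ * s) +
            Real.exp (τ * (l - r)) * ((0 - 1) * (τ * s) * (s - l) ^ (τ * s - 1)))) l :=
      (e1.mul e2).const_mul _
    rw [hev.deriv_eq, hD.deriv]
    have hmem : l ∈ Set.Icc r s := ⟨le_of_lt hl.1, le_of_lt hl.2⟩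
    have habs : |s - l| = s - l := abs_of_pos hls
    have hA : (s - l) ^ (τ * s) = (s - l) ^ (τ * s - 1) * (s - l) := by
      rw [← Real.rpow_add_one hls.ne' (τ * s - 1)]; norm_num
    simp only [p, if_pos hmem, habs, habsr]
    rw [hA]
    field_simp
    ring
  · -- MGF part
    intro u hu
    have hc : 0 < τ + u := by linarith
    set c := τ + u with hcdef
    clear_value c
    set f : ℝ → ℝ := fun t => t ^ (τ * s - 1) * Real.exp (-t) with hfdef
    set K : ℝ := β * τ * Real.exp (s * u + (s - r) * τ) /
      ((s - r) ^ (τ * s) * c ^ (τ * s - 1)) with hK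
    have hp : (fun l => Real.exp (u * l) * p l) =
        Set.indicator (Set.Icc r s) (fun l => Real.exp (u * l) *
          (β * τ * Real.exp (τ * (l - r)) * |s - l| ^ (τ * s - 1) / |s - r| ^ (τ * s))) := by
      funext l
      by_cases h : l ∈ Set.Icc r s
      · rw [Set.indicator_of_mem h]; simp only [p, if_pos h]
      · rw [Set.indicator_of_notMem h]; simp only [p, if_neg h, mul_zero]
    rw [hp, MeasureTheory.integral_indicator measurableSet_Icc,
      MeasureTheory.integral_Icc_eq_integral_Ioc, ← intervalIntegral.integral_of_le hrs.le]
    have key : Set.EqOn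
        (fun l => Real.exp (u * l) *
          (β * τ * Real.exp (τ * (l - r)) * |s - l| ^ (τ * s - 1) / |s - r| ^ (τ * s)))
        (fun l => K * f (c * s - c * l)) (Set.uIcc r s) := by
      intro l hl
      rw [Set.uIcc_of_le hrs.le] at hl
      have hsl : 0 ≤ s - l := by linarith [hl.2]
      have habs : |s - l| = s - l := abs_of_nonneg hsl
      have hrw : c * s - c * l = c * (s - l) := by ring
      have hcp : (0:ℝ) < c ^ (τ * s - 1) := Real.rpow_pos_of_pos hc _
      simp only [habs, habsr, hK, hfdef, hrw]
      rw [Real.mul_rpow hc.le hsl]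
      have hex : Real.exp (s * u + (s - r) * τ) * Real.exp (-(c * (s - l))) =
          Real.exp (u * l) * Real.exp (τ * (l - r)) := by
        rw [← Real.exp_add, ← Real.exp_add]
        congr 1
        rw [hcdef]; ring
      field_simp
      have hex2 : Real.exp (u * s + τ * (s - r)) * Real.exp (-((s - l) * c)) =
          Real.exp (u * l) * Real.exp (τ * (l - r)) := by
        rw [← hex]; ring_nf
      linear_combination (-((s - l) ^ (τ * s - 1))) * hex2
    rw [intervalIntegral.integral_congr key, intervalIntegral.integral_const_mul,
      intervalIntegral.integral_comp_sub_mul f hc.ne' (c * s)]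
    have h0 : c * s - c * s = 0 := by ring
    have h1 : c * s - c * r = (s - r) * c := by ring
    rw [h0, h1]
    have hγ : (∫ t in (0:ℝ)..(s - r) * c, f t) = lowerGamma (τ * s) ((s - r) * c) := by
      rw [hfdef]; rfl
    rw [hγ, smul_eq_mul, hK]
    have hmul : ((s - r) * c) ^ (τ * s) = (s - r) ^ (τ * s) * c ^ (τ * s) :=
      Real.mul_rpow hsr.le hc.le
    have hc1 : c ^ (τ * s - 1) * c = c ^ (τ * s) := by
      rw [← Real.rpow_add_one hc.ne' (τ * s - 1)]; norm_num
    have hcp : (0:ℝ) < c ^ (τ * s - 1) := Real.rpow_pos_of_pos hc _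
    rw [hmul, ← hc1]
    field_simp
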